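/- Let n ≥ 1, a > 0, c > 0, let K ⊂ ℝ²ⁿ be compact, and let Φ : ℝⁿ × ℝ²ⁿ → ℂ be measurable with Im Φ(x,z,θ) ≥ c|x−z|² for all x ∈ ℝⁿ and all (z,θ) ∈ K. Then there exists C > 0 (depending only on n, c, a and K) such that for all ε ∈ (0,1] and all h ∈ L²(ℝ²ⁿ) with support contained in K, the function x ↦ ∫_{{(z,θ) : |x−z| ≥ a}} h(z,θ) e^{iΦ(x,z,θ)/ε} dz dθ belongs to L²(ℝⁿ) with ‖·‖_{L²(ℝⁿ)} ≤ C e^{−c a²/(2ε)} ‖h‖_{L²(ℝ²ⁿ)}. -/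

import Mathlib

open MeasureTheory
open scoped Real ENNReal

noncomputable section

abbrev Evec (n : ℕ) := EuclideanSpace ℝ (Fin n)

set_option maxHeartbeats 1000000 in
/-- Let `a, c > 0`, `K ⊂ ℝ²ⁿ` compact and `Φ` measurable with
`Im Φ(x,z,θ) ≥ c|x−z|²` for `(z,θ) ∈ K`. Then there is `C > 0` (depending only on
`n, c, a, K`) such that for all `ε ∈ (0,1]` and all `h ∈ L²` supported in `K`, the function
`x ↦ ∫_{|x−z| ≥ a} h(z,θ) e^{iΦ(x,z,θ)/ε} dz dθ` is in `L²(ℝⁿ)` with norm at most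
`C e^{−ca²/(2ε)} ‖h‖_{L²}`. -/
theorem statement_18 (n : ℕ) (hn : 1 ≤ n) (a c : ℝ) (ha : 0 < a) (hc : 0 < c)
    (K : Set (Evec n × Evec n)) (hK : IsCompact K) :
    ∃ C > (0 : ℝ),
      ∀ Φ : Evec n → Evec n × Evec n → ℂ,
        Measurable (fun q : Evec n × (Evec n × Evec n) => Φ q.1 q.2) →
        (∀ x : Evec n, ∀ p ∈ K, c * ‖x - p.1‖ ^ 2 ≤ (Φ x p).im) →
        ∀ ε ∈ Set.Ioc (0 : ℝ) 1, ∀ h : Evec n × Evec n → ℂ,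
          MemLp h 2 (volume : Measure (Evec n × Evec n)) → Function.support h ⊆ K →
          MemLp (fun x : Evec n =>
              ∫ p in {p : Evec n × Evec n | a ≤ ‖x - p.1‖},
                h p * Complex.exp (Complex.I * Φ x p / (ε : ℂ))) 2
            (volume : Measure (Evec n)) ∧
          eLpNorm (fun x : Evec n =>
              ∫ p in {p : Evec n × Evec n | a ≤ ‖x - p.1‖},
                h p * Complex.exp (Complex.I * Φ x p / (ε : ℂ))) 2 volume ≤
            ENNReal.ofReal (C * Real.exp (-(c * a ^ 2) / (2 * ε))) * eLpNorm h 2 volume := by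
  classical
  -- The Gaussian `exp (-c‖x‖²)` is integrable on `Evec n`.
  have hGauss : Integrable (fun x : Evec n => Real.exp (-(c * ‖x‖ ^ 2))) := by
    have h1 := (GaussianFourier.integrable_cexp_neg_mul_sq_norm_add (V := Evec n)
      (b := (c : ℂ)) (by simpa using hc) 0 0).norm
    refine h1.congr (Filter.Eventually.of_forall fun v => ?_)
    show ‖Complex.exp (-(c : ℂ) * (‖v‖ : ℂ) ^ 2 +
        0 * ((inner ℝ (0 : Evec n) v : ℝ) : ℂ))‖ = Real.exp (-(c * ‖v‖ ^ 2))
    rw [Complex.norm_exp]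
    congr 1
    have hrw : -(c : ℂ) * (‖v‖ : ℂ) ^ 2 + 0 * ((inner ℝ (0 : Evec n) v : ℝ) : ℂ) =
        ((-(c * ‖v‖ ^ 2) : ℝ) : ℂ) := by push_cast; ring
    rw [hrw, Complex.ofReal_re]
  -- The (finite) Gaussian mass.
  set IG : ℝ≥0∞ := ∫⁻ x : Evec n, ENNReal.ofReal (Real.exp (-(c * ‖x‖ ^ 2))) with hIGdef
  have hIG_lt : IG < ∞ := by
    have := hGauss.hasFiniteIntegral
    rw [HasFiniteIntegral] at this
    refine lt_of_eq_of_lt ?_ this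
    refine lintegral_congr fun x => ?_
    rw [← Real.enorm_eq_ofReal (Real.exp_nonneg _)]
  set M : ℝ≥0∞ := volume K * IG with hMdef
  have hM_ne : M ≠ ∞ := ENNReal.mul_ne_top hK.measure_lt_top.ne hIG_lt.ne
  refine ⟨Real.sqrt M.toReal + 1, by positivity, ?_⟩
  set C : ℝ := Real.sqrt M.toReal + 1 with hCdef
  have hM_le : M ^ (1 / 2 : ℝ) ≤ ENNReal.ofReal C := by
    conv_lhs => rw [← ENNReal.ofReal_toReal hM_ne]
    rw [ENNReal.ofReal_rpow_of_nonneg ENNReal.toReal_nonneg (by norm_num)]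
    refine ENNReal.ofReal_le_ofReal ?_
    rw [← Real.sqrt_eq_rpow]
    linarith
  intro Φ hΦm hΦim ε hε h hh hsupp
  obtain ⟨hε0, hε1⟩ := hε
  set E : ℝ := Real.exp (-(c * a ^ 2) / (2 * ε)) with hEdef
  have hE0 : 0 < E := Real.exp_pos _
  -- the sets of integration
  set S : Evec n → Set (Evec n × Evec n) := fun x => {p : Evec n × Evec n | a ≤ ‖x - p.1‖}
    with hSdef
  have hSmeas : ∀ x, MeasurableSet (S x) := by
    intro x
    have : Continuous fun p : Evec n × Evec n => ‖x - p.1‖ :=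
      (continuous_const.sub continuous_fst).norm
    exact (isClosed_le continuous_const this).measurableSet
  -- The main estimate, for strongly measurable `g` supported in `K`.
  have key : ∀ g : Evec n × Evec n → ℂ, StronglyMeasurable g → Function.support g ⊆ K →
      MemLp g 2 (volume : Measure (Evec n × Evec n)) →
      MemLp (fun x : Evec n =>
          ∫ p in S x, g p * Complex.exp (Complex.I * Φ x p / (ε : ℂ))) 2
        (volume : Measure (Evec n)) ∧
      eLpNorm (fun x : Evec n =>
          ∫ p in S x, g p * Complex.exp (Complex.I * Φ x p / (ε : ℂ))) 2 volume ≤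
        ENNReal.ofReal (C * E) * eLpNorm g 2 volume := by
    intro g hgm hgsupp hg2
    set F : Evec n → ℂ := fun x =>
      ∫ p in S x, g p * Complex.exp (Complex.I * Φ x p / (ε : ℂ)) with hFdef
    -- measurability of F
    have hFmeas : AEStronglyMeasurable F (volume : Measure (Evec n)) := by
      have hA : MeasurableSet {q : Evec n × (Evec n × Evec n) | a ≤ ‖q.1 - q.2.1‖} := by
        have : Continuous fun q : Evec n × (Evec n × Evec n) => ‖q.1 - q.2.1‖ :=
          (continuous_fst.sub (continuous_fst.comp continuous_snd)).norm
        exact (isClosed_le continuous_const this).measurableSet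
      have hGm : StronglyMeasurable fun q : Evec n × (Evec n × Evec n) =>
          Set.indicator {q : Evec n × (Evec n × Evec n) | a ≤ ‖q.1 - q.2.1‖}
            (fun q => g q.2 * Complex.exp (Complex.I * Φ q.1 q.2 / (ε : ℂ))) q := by
        refine StronglyMeasurable.indicator ?_ hA
        refine StronglyMeasurable.mul (hgm.comp_measurable measurable_snd) ?_
        exact (Complex.continuous_exp.measurable.comp
          ((measurable_const.mul hΦm).div_const _)).stronglyMeasurable
      have : F = fun x => ∫ p : Evec n × Evec n,
          Set.indicator {q : Evec n × (Evec n × Evec n) | a ≤ ‖q.1 - q.2.1‖}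
            (fun q => g q.2 * Complex.exp (Complex.I * Φ q.1 q.2 / (ε : ℂ))) (x, p) := by
        funext x
        simp only [hFdef]
        rw [← integral_indicator (hSmeas x)]
        congr 1
      rw [this]
      exact hGm.integral_prod_right'.aestronglyMeasurable
    -- the kernel
    set k : Evec n → Evec n × Evec n → ℝ≥0∞ := fun x p =>
      (Set.indicator K (fun _ => (1 : ℝ≥0∞)) p) *
        ENNReal.ofReal (Real.exp (-(c * ‖x - p.1‖ ^ 2) / 2)) with hkdef
    -- pointwise bound
    have hb1 : ∀ x : Evec n, (‖F x‖₊ : ℝ≥0∞) ≤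
        ENNReal.ofReal E * ∫⁻ p, (‖g p‖₊ : ℝ≥0∞) * k x p := by
      intro x
      have step1 : (‖F x‖₊ : ℝ≥0∞) ≤
          ∫⁻ p in S x, (‖g p * Complex.exp (Complex.I * Φ x p / (ε : ℂ))‖₊ : ℝ≥0∞) :=
        enorm_integral_le_lintegral_enorm _
      rw [← lintegral_indicator (hSmeas x)] at step1
      refine step1.trans ?_
      rw [← lintegral_const_mul' _ _ ENNReal.ofReal_ne_top]
      refine lintegral_mono fun p => ?_
      by_cases hpS : p ∈ S x
      · by_cases hpg : g p = 0
        · simp [Set.indicator_apply, hpg]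
        · have hpK : p ∈ K := hgsupp hpg
          have hre : (Complex.I * Φ x p / (ε : ℂ)).re = -(Φ x p).im / ε := by
            rw [Complex.div_ofReal_re]
            congr 1
            simp [Complex.mul_re]
          have hnorm : ‖Complex.exp (Complex.I * Φ x p / (ε : ℂ))‖ =
              Real.exp (-(Φ x p).im / ε) := by
            rw [Complex.norm_exp, hre]
          have haS : a ≤ ‖x - p.1‖ := hpS
          have hta : c * a ^ 2 ≤ c * ‖x - p.1‖ ^ 2 :=
            mul_le_mul_of_nonneg_left (pow_le_pow_left₀ ha.le haS 2) hc.le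
          have hexp : Real.exp (-(Φ x p).im / ε) ≤
              E * Real.exp (-(c * ‖x - p.1‖ ^ 2) / 2) := by
            rw [hEdef, ← Real.exp_add]
            refine Real.exp_le_exp.2 ?_
            have hIm := hΦim x p hpK
            rw [div_le_iff₀ hε0]
            have hexpand : (-(c * a ^ 2) / (2 * ε) + -(c * ‖x - p.1‖ ^ 2) / 2) * ε =
                -(c * a ^ 2) / 2 + -(c * ‖x - p.1‖ ^ 2) / 2 * ε := by
              field_simp
            rw [hexpand]
            nlinarith [mul_nonneg (mul_nonneg hc.le (sq_nonneg ‖x - p.1‖))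
              (by linarith : (0:ℝ) ≤ 1 - ε)]
          rw [Set.indicator_of_mem hpS]
          have e1 : (‖g p * Complex.exp (Complex.I * Φ x p / (ε : ℂ))‖₊ : ℝ≥0∞) =
              (‖g p‖₊ : ℝ≥0∞) *
                ENNReal.ofReal ‖Complex.exp (Complex.I * Φ x p / (ε : ℂ))‖ := by
            rw [nnnorm_mul, ENNReal.coe_mul, ofReal_norm_eq_enorm]
            rfl
          have e2 : k x p = ENNReal.ofReal (Real.exp (-(c * ‖x - p.1‖ ^ 2) / 2)) := by
            simp [hkdef, Set.indicator_of_mem hpK]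
          rw [e1, hnorm, e2]
          calc (‖g p‖₊ : ℝ≥0∞) * ENNReal.ofReal (Real.exp (-(Φ x p).im / ε))
              ≤ (‖g p‖₊ : ℝ≥0∞) *
                (ENNReal.ofReal E *
                  ENNReal.ofReal (Real.exp (-(c * ‖x - p.1‖ ^ 2) / 2))) := by
                refine mul_le_mul_right ?_ _
                rw [← ENNReal.ofReal_mul hE0.le]
                exact ENNReal.ofReal_le_ofReal hexp
            _ = ENNReal.ofReal E * ((‖g p‖₊ : ℝ≥0∞) *
                ENNReal.ofReal (Real.exp (-(c * ‖x - p.1‖ ^ 2) / 2))) := by ring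
      · simp [Set.indicator_of_notMem hpS]
    -- Cauchy–Schwarz
    set N : ℝ≥0∞ := (∫⁻ p, (‖g p‖₊ : ℝ≥0∞) ^ (2 : ℝ)) ^ (1 / 2 : ℝ) with hNdef
    have hkmeas : ∀ x, Measurable (k x) := by
      intro x
      refine Measurable.mul ((measurable_const).indicator hK.measurableSet) ?_
      refine ENNReal.measurable_ofReal.comp ?_
      exact (Real.continuous_exp.comp ((continuous_const.mul
        ((continuous_const.sub continuous_fst).norm.pow 2)).neg.div_const 2)).measurable
    have hCS : ∀ x, (∫⁻ p, (‖g p‖₊ : ℝ≥0∞) * k x p) ≤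
        N * (∫⁻ p, k x p ^ (2 : ℝ)) ^ (1 / 2 : ℝ) := by
      intro x
      have := ENNReal.lintegral_mul_le_Lp_mul_Lq
        (volume : Measure (Evec n × Evec n))
        (Real.HolderConjugate.two_two : Real.HolderConjugate 2 2)
        (hgm.measurable.nnnorm.coe_nnreal_ennreal).aemeasurable
        (hkmeas x).aemeasurable
      simpa only [Pi.mul_apply] using this
    -- the squared kernel integral
    set G : Evec n → ℝ≥0∞ := fun x => ∫⁻ p, (Set.indicator K (fun _ => (1 : ℝ≥0∞)) p) *
      ENNReal.ofReal (Real.exp (-(c * ‖x - p.1‖ ^ 2))) with hGdef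
    have hk2 : ∀ x, (∫⁻ p, k x p ^ (2 : ℝ)) = G x := by
      intro x
      refine lintegral_congr fun p => ?_
      rw [hkdef]
      simp only
      rw [ENNReal.mul_rpow_of_nonneg _ _ (by norm_num : (0:ℝ) ≤ 2)]
      congr 1
      · by_cases hpK : p ∈ K
        · simp [Set.indicator_of_mem hpK, ENNReal.one_rpow]
        · simp [Set.indicator_of_notMem hpK,
            ENNReal.zero_rpow_of_pos (by norm_num : (0:ℝ) < 2)]
      · rw [ENNReal.ofReal_rpow_of_nonneg (Real.exp_nonneg _) (by norm_num)]
        congr 1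
        rw [show (2:ℝ) = ((2:ℕ) : ℝ) by norm_num, Real.rpow_natCast, pow_two,
          ← Real.exp_add]
        congr 1
        ring
    -- squared pointwise bound
    have hx2 : ∀ x, (‖F x‖₊ : ℝ≥0∞) ^ (2 : ℝ) ≤
        (ENNReal.ofReal E) ^ (2 : ℝ) * N ^ (2 : ℝ) * G x := by
      intro x
      have h1 : (‖F x‖₊ : ℝ≥0∞) ≤ ENNReal.ofReal E * (N * G x ^ (1 / 2 : ℝ)) := by
        refine (hb1 x).trans ?_
        refine mul_le_mul_right ?_ _
        refine (hCS x).trans ?_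
        rw [hk2 x]
      calc (‖F x‖₊ : ℝ≥0∞) ^ (2 : ℝ)
          ≤ (ENNReal.ofReal E * (N * G x ^ (1 / 2 : ℝ))) ^ (2 : ℝ) :=
            ENNReal.rpow_le_rpow h1 (by norm_num)
        _ = (ENNReal.ofReal E) ^ (2 : ℝ) * N ^ (2 : ℝ) * G x := by
            rw [ENNReal.mul_rpow_of_nonneg _ _ (by norm_num : (0:ℝ) ≤ 2),
              ENNReal.mul_rpow_of_nonneg _ _ (by norm_num : (0:ℝ) ≤ 2)]
            simp only [← ENNReal.rpow_mul]
            rw [show ((1:ℝ)/2 * 2) = 1 by norm_num]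
            simp only [ENNReal.rpow_one]
            ring
    -- measurability of G
    have hGunc : Measurable fun q : Evec n × (Evec n × Evec n) =>
        (Set.indicator K (fun _ => (1 : ℝ≥0∞)) q.2) *
          ENNReal.ofReal (Real.exp (-(c * ‖q.1 - q.2.1‖ ^ 2))) := by
      refine Measurable.mul ?_ ?_
      · exact ((measurable_const).indicator hK.measurableSet).comp measurable_snd
      · refine ENNReal.measurable_ofReal.comp ?_
        exact (Real.continuous_exp.comp (continuous_const.mul
          ((continuous_fst.sub (continuous_fst.comp continuous_snd)).norm.pow 2)).neg).measurable
    have hGmeas : Measurable G := by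
      rw [hGdef]
      exact Measurable.lintegral_prod_right' hGunc
    -- total mass of G
    have hGint : (∫⁻ x, G x) = M := by
      rw [hGdef]
      rw [lintegral_lintegral_swap hGunc.aemeasurable]
      have inner_eq : ∀ p : Evec n × Evec n,
          (∫⁻ x : Evec n, (Set.indicator K (fun _ => (1 : ℝ≥0∞)) p) *
            ENNReal.ofReal (Real.exp (-(c * ‖x - p.1‖ ^ 2)))) =
          (Set.indicator K (fun _ => (1 : ℝ≥0∞)) p) * IG := by
        intro p
        rw [lintegral_const_mul' _ _ (by
          by_cases hpK : p ∈ K <;> simp [Set.indicator_apply, hpK])]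
        rw [hIGdef]
        rw [lintegral_sub_right_eq_self
          (fun y : Evec n => ENNReal.ofReal (Real.exp (-(c * ‖y‖ ^ 2)))) p.1]
      rw [lintegral_congr inner_eq, lintegral_mul_const' _ _ hIG_lt.ne, hMdef]
      congr 1
      rw [← lintegral_indicator_one hK.measurableSet]
      exact lintegral_congr fun p => by
        by_cases hpK : p ∈ K <;> simp [Set.indicator_apply, hpK]
    -- put things together
    have h2tor : (2 : ℝ≥0∞).toReal = (2 : ℝ) := by norm_num
    have hNg : eLpNorm g 2 volume = N := by
      rw [eLpNorm_eq_lintegral_rpow_enorm_toReal (by norm_num) (by norm_num), h2tor, hNdef]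
      rfl
    have hNne : N ≠ ∞ := by
      rw [← hNg]
      exact hg2.2.ne
    have hconst_ne : (ENNReal.ofReal E) ^ (2 : ℝ) * N ^ (2 : ℝ) ≠ ∞ :=
      ENNReal.mul_ne_top
        (ENNReal.rpow_ne_top_of_nonneg (by norm_num) ENNReal.ofReal_ne_top)
        (ENNReal.rpow_ne_top_of_nonneg (by norm_num) hNne)
    have hbound : eLpNorm F 2 volume ≤ ENNReal.ofReal (C * E) * eLpNorm g 2 volume := by
      rw [eLpNorm_eq_lintegral_rpow_enorm_toReal (by norm_num) (by norm_num), h2tor]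
      have step : (∫⁻ x, (‖F x‖₊ : ℝ≥0∞) ^ (2 : ℝ)) ≤
          (ENNReal.ofReal E) ^ (2 : ℝ) * N ^ (2 : ℝ) * M := by
        rw [← hGint, ← lintegral_const_mul' _ _ hconst_ne]
        exact lintegral_mono fun x => hx2 x
      calc (∫⁻ x, (‖F x‖₊ : ℝ≥0∞) ^ (2 : ℝ)) ^ (1 / (2 : ℝ))
          ≤ ((ENNReal.ofReal E) ^ (2 : ℝ) * N ^ (2 : ℝ) * M) ^ (1 / 2 : ℝ) :=
            ENNReal.rpow_le_rpow step (by norm_num)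
        _ = ENNReal.ofReal E * N * M ^ (1 / 2 : ℝ) := by
            rw [ENNReal.mul_rpow_of_nonneg _ _ (by norm_num : (0:ℝ) ≤ 1/2),
              ENNReal.mul_rpow_of_nonneg _ _ (by norm_num : (0:ℝ) ≤ 1/2),
              ← ENNReal.rpow_mul, ← ENNReal.rpow_mul]
            rw [show ((2:ℝ) * (1/2)) = 1 by norm_num, ENNReal.rpow_one, ENNReal.rpow_one]
        _ ≤ ENNReal.ofReal E * N * ENNReal.ofReal C :=
            mul_le_mul_right hM_le _
        _ = ENNReal.ofReal (C * E) * N := by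
            rw [ENNReal.ofReal_mul (by positivity)]
            ring
        _ = ENNReal.ofReal (C * E) * eLpNorm g 2 volume := by rw [hNg]
    refine ⟨⟨hFmeas, ?_⟩, hbound⟩
    refine lt_of_le_of_lt hbound ?_
    exact ENNReal.mul_lt_top ENNReal.ofReal_lt_top hg2.2
  -- transfer to the merely a.e.-measurable `h`
  set h₀ : Evec n × Evec n → ℂ := hh.1.mk h with hh₀def
  set h' : Evec n × Evec n → ℂ := Set.indicator K h₀ with hh'def
  have hh'meas : StronglyMeasurable h' := hh.1.stronglyMeasurable_mk.indicator hK.measurableSet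
  have hhh : h =ᵐ[volume] h' := by
    filter_upwards [hh.1.ae_eq_mk] with p hp
    simp only [hh'def, Set.indicator_apply]
    by_cases hpK : p ∈ K
    · simp [hpK, hp]
      rfl
    · simp only [if_neg hpK]
      by_contra hne
      exact hpK (hsupp hne)
  have hh'supp : Function.support h' ⊆ K := Set.support_indicator_subset
  have hh'2 : MemLp h' 2 (volume : Measure (Evec n × Evec n)) := hh.ae_eq hhh
  have hFeq : (fun x : Evec n =>
      ∫ p in {p : Evec n × Evec n | a ≤ ‖x - p.1‖},
        h p * Complex.exp (Complex.I * Φ x p / (ε : ℂ))) =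
      fun x : Evec n => ∫ p in S x, h' p * Complex.exp (Complex.I * Φ x p / (ε : ℂ)) := by
    funext x
    refine integral_congr_ae ?_
    refine ae_restrict_of_ae ?_
    filter_upwards [hhh] with p hp
    rw [hp]
  obtain ⟨hmem, hbd⟩ := key h' hh'meas hh'supp hh'2
  rw [hFeq]
  refine ⟨hmem, ?_⟩
  refine hbd.trans ?_
  rw [eLpNorm_congr_ae hhh]

end
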